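/- (Threshold stability, general margins.) Let Z = (Z_1,…,Z_D) be a standard MGP random vector, Z_j = E + S_j. Let σ ∈ (0,∞)^D and ξ ∈ ℝ^D, and define Y_j = σ_j(exp(ξ_j Z_j) − 1)/ξ_j (interpreted as σ_j Z_j when ξ_j = 0). Let v ∈ [0,∞)^D satisfy σ_j + ξ_j v_j > 0 for all j, and set u_j = ξ_j^{-1} log(1 + ξ_j v_j/σ_j) ≥ 0 (interpreted as v_j/σ_j when ξ_j = 0). Then the event A = {∃ j : Y_j > v_j} equals {∃ j : Z_j > u_j} and has positive probability; on A define Z'_j = ξ_j^{-1} log(1 + ξ_j (Y_j − v_j)/(σ_j + ξ_j v_j)). Then Z'_j = Z_j − u_j on A, and conditionally on A the random variable M' = max_j Z'_j is unit-exponential and is independent of the vector Z' − M'·1. In other words, the conditional distribution of Y − v given Y ≰ v is multivariate generalized Pareto with scale vector σ + ξ·v and shape vector ξ. -/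

import Mathlib

open MeasureTheory ProbabilityTheory

/-- The marginal transformation `z ↦ σ (exp (ξ z) − 1)/ξ`, interpreted as `σ z` when
`ξ = 0`, turning a standard MGP component into one with scale `σ` and shape `ξ`. -/
noncomputable def gpScale (σ ξ z : ℝ) : ℝ :=
  if ξ = 0 then σ * z else σ * (Real.exp (ξ * z) - 1) / ξ

/-- The threshold on the standard scale: `u = ξ⁻¹ log (1 + ξ v/σ)`, interpreted as
`v/σ` when `ξ = 0`. -/
noncomputable def gpLevel (σ ξ v : ℝ) : ℝ :=
  if ξ = 0 then v / σ else Real.log (1 + ξ * v / σ) / ξ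

lemma gpScale_zero (σ ξ : ℝ) : gpScale σ ξ 0 = 0 := by
  unfold gpScale
  split_ifs <;> simp

lemma gpScale_strictMono {σ ξ : ℝ} (hσ : 0 < σ) : StrictMono (gpScale σ ξ) := by
  intro z₁ z₂ h
  unfold gpScale
  rcases eq_or_ne ξ 0 with hξ | hξ
  · simpa [hξ] using mul_lt_mul_of_pos_left h hσ
  · simp only [hξ, if_false]
    rcases hξ.lt_or_gt with hneg | hpos
    · have he : Real.exp (ξ * z₂) < Real.exp (ξ * z₁) :=
        Real.exp_lt_exp.2 (by nlinarith)
      rw [div_lt_div_right_of_neg hneg]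
      nlinarith
    · have he : Real.exp (ξ * z₁) < Real.exp (ξ * z₂) :=
        Real.exp_lt_exp.2 (by nlinarith)
      rw [div_lt_div_iff_of_pos_right hpos]
      nlinarith

lemma gpScale_gpLevel {σ ξ v : ℝ} (hσ : 0 < σ) (h : 0 < σ + ξ * v) :
    gpScale σ ξ (gpLevel σ ξ v) = v := by
  have hσ0 : σ ≠ 0 := ne_of_gt hσ
  have h1 : 0 < 1 + ξ * v / σ := by
    have hrw : 1 + ξ * v / σ = (σ + ξ * v) / σ := by field_simp
    rw [hrw]; positivity
  unfold gpScale gpLevel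
  rcases eq_or_ne ξ 0 with hξ | hξ
  · simp only [hξ, if_true]
    field_simp
  · simp only [hξ, if_false]
    have hmul : ξ * (Real.log (1 + ξ * v / σ) / ξ) = Real.log (1 + ξ * v / σ) := by
      field_simp
    rw [hmul, Real.exp_log h1]
    field_simp
    ring

lemma gp_lt_iff {σ ξ v : ℝ} (hσ : 0 < σ) (h : 0 < σ + ξ * v) (z : ℝ) :
    v < gpScale σ ξ z ↔ gpLevel σ ξ v < z := by
  conv_lhs => rw [← gpScale_gpLevel hσ h]
  exact StrictMono.lt_iff_lt (gpScale_strictMono hσ)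

lemma gpLevel_nonneg {σ ξ v : ℝ} (hσ : 0 < σ) (h : 0 < σ + ξ * v) (hv : 0 ≤ v) :
    0 ≤ gpLevel σ ξ v := by
  by_contra hlt
  push_neg at hlt
  have h2 := (gp_lt_iff hσ h 0).2 hlt
  rw [gpScale_zero] at h2
  linarith

lemma gp_shift {σ ξ v : ℝ} (hσ : 0 < σ) (h : 0 < σ + ξ * v) (z : ℝ) :
    gpLevel (σ + ξ * v) ξ (gpScale σ ξ z - v) = z - gpLevel σ ξ v := by
  have hσ0 : σ ≠ 0 := ne_of_gt hσ
  have hs : σ + ξ * v ≠ 0 := ne_of_gt h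
  unfold gpScale gpLevel
  rcases eq_or_ne ξ 0 with hξ | hξ
  · subst hξ
    simp only [if_true]
    field_simp
    ring_nf
    field_simp
    ring
  · simp only [hξ, if_false]
    have harg : 1 + ξ * (σ * (Real.exp (ξ * z) - 1) / ξ - v) / (σ + ξ * v)
        = σ * Real.exp (ξ * z) / (σ + ξ * v) := by
      field_simp
      ring
    rw [harg, Real.log_div (by positivity) hs,
      Real.log_mul hσ0 (Real.exp_pos _).ne', Real.log_exp]
    have h1 : 1 + ξ * v / σ = (σ + ξ * v) / σ := by field_simp
    rw [h1, Real.log_div hs hσ0]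
    field_simp
    ring

/-- Threshold stability with general margins. Let `Z j = E + S j` be a
standard MGP vector, `Y j = σ j (exp (ξ j * Z j) − 1)/ξ j` a general MGP vector, and let
`v ∈ [0,∞)^D` satisfy `σ j + ξ j * v j > 0`. With `u j = ξ j⁻¹ log (1 + ξ j v j/σ j) ≥ 0`,
the event `A = {∃ j, Y j > v j}` equals `{∃ j, Z j > u j}` and has positive probability;
on `A`, `Z' j = ξ j⁻¹ log (1 + ξ j (Y j − v j)/(σ j + ξ j v j))` equals `Z j − u j`, and
conditionally on `A` the maximum `M' = max_j Z' j` is unit-exponential and independent of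
`Z' − M'·1`; i.e. `Y − v` given `Y ≰ v` is MGP with scale `σ + ξ·v` and shape `ξ`. -/
theorem stmt_6
    {Ω : Type*} [MeasureSpace Ω] [IsProbabilityMeasure (ℙ : Measure Ω)]
    {D : ℕ} (hD : 0 < D)
    (E : Ω → ℝ) (S : Ω → Fin D → ℝ)
    (hEmeas : Measurable E) (hSmeas : Measurable S)
    (hEexp : ∀ t : ℝ, 0 ≤ t → ℙ {ω | t < E ω} = ENNReal.ofReal (Real.exp (-t)))
    (hindep : IndepFun E S ℙ)
    (hSle : ∀ j, ∀ᵐ ω ∂ℙ, S ω j ≤ 0)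
    (hSmax : ∀ᵐ ω ∂ℙ, (⨆ j, S ω j) = 0)
    (σ ξ v u : Fin D → ℝ) (hσ : ∀ j, 0 < σ j) (hv : ∀ j, 0 ≤ v j)
    (hσξv : ∀ j, 0 < σ j + ξ j * v j)
    (hu : ∀ j, u j = gpLevel (σ j) (ξ j) (v j))
    (Y : Ω → Fin D → ℝ) (hY : ∀ ω j, Y ω j = gpScale (σ j) (ξ j) (E ω + S ω j))
    (A : Set Ω) (hA : A = {ω | ∃ j, v j < Y ω j})
    (Z' : Ω → Fin D → ℝ)
    (hZ' : ∀ ω j, Z' ω j = gpLevel (σ j + ξ j * v j) (ξ j) (Y ω j - v j))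
    (M' : Ω → ℝ) (hM' : ∀ ω, M' ω = ⨆ j, Z' ω j) :
    (∀ j, 0 ≤ u j)
    ∧ A = {ω | ∃ j, u j < E ω + S ω j}
    ∧ 0 < ℙ A
    ∧ (∀ ω ∈ A, ∀ j, Z' ω j = (E ω + S ω j) - u j)
    ∧ (∀ t : ℝ, 0 ≤ t → ℙ[{ω | t < M' ω} | A] = ENNReal.ofReal (Real.exp (-t)))
    ∧ IndepFun M' (fun ω => fun j => Z' ω j - M' ω) (ℙ[|A]) := by
  have hne : Nonempty (Fin D) := ⟨⟨0, hD⟩⟩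
  have hu0 : ∀ j, 0 ≤ u j := fun j =>
    (hu j) ▸ gpLevel_nonneg (hσ j) (hσξv j) (hv j)
  -- pointwise equivalence of exceedance events
  have hiff : ∀ ω j, v j < Y ω j ↔ u j < E ω + S ω j := by
    intro ω j
    rw [hY ω j, hu j]
    exact gp_lt_iff (hσ j) (hσξv j) _
  have hAZ : A = {ω | ∃ j, u j < E ω + S ω j} := by
    rw [hA]
    ext ω
    simp only [Set.mem_setOf_eq]
    exact exists_congr fun j => hiff ω j
  -- Z' = Z - u everywhere
  have hZ'eq : ∀ ω j, Z' ω j = (E ω + S ω j) - u j := by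
    intro ω j
    rw [hZ' ω j, hY ω j, hu j]
    exact gp_shift (hσ j) (hσξv j) _
  -- the S-measurable shift
  set Q : (Fin D → ℝ) → ℝ := fun s => ⨆ j, (s j - u j) with hQdef
  have hQmeas : Measurable Q :=
    Measurable.iSup fun j => (measurable_pi_apply j).sub measurable_const
  have hbdd : ∀ s : Fin D → ℝ, BddAbove (Set.range fun j => s j - u j) :=
    fun s => Set.Finite.bddAbove (Set.finite_range _)
  -- M' = E + Q ∘ S
  have hM'eq : ∀ ω, M' ω = E ω + Q (S ω) := by
    intro ω
    rw [hM' ω]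
    have h1 : ∀ j, Z' ω j = (S ω j - u j) + E ω := fun j => by rw [hZ'eq]; ring
    simp only [h1]
    apply le_antisymm
    · refine ciSup_le fun j => ?_
      have h2 : S ω j - u j ≤ Q (S ω) := le_ciSup (hbdd (S ω)) j
      linarith
    · obtain ⟨i, hi⟩ := Finite.exists_max (fun j => S ω j - u j)
      have h2 : Q (S ω) ≤ S ω i - u i := ciSup_le hi
      have h3 : (S ω i - u i) + E ω ≤ ⨆ j, (S ω j - u j + E ω) :=
        le_ciSup (f := fun j => S ω j - u j + E ω)
          (Set.Finite.bddAbove (Set.finite_range _)) i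
      linarith
  -- A as a tail event of E
  have hAE : A = {ω | -Q (S ω) < E ω} := by
    rw [hAZ]
    ext ω
    simp only [Set.mem_setOf_eq]
    constructor
    · rintro ⟨j, hj⟩
      have h2 : S ω j - u j ≤ Q (S ω) := le_ciSup (hbdd (S ω)) j
      linarith
    · intro hlt
      have h2 : -E ω < Q (S ω) := by linarith
      obtain ⟨j, hj⟩ := exists_lt_of_lt_ciSup h2
      exact ⟨j, by linarith⟩
  have hAmeas : MeasurableSet A := by
    rw [hAE]
    exact measurableSet_lt ((hQmeas.comp hSmeas).neg) hEmeas
  -- nonnegativity of the shift, a.e.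
  have hQ0 : ∀ᵐ ω ∂ℙ, Q (S ω) ≤ 0 := by
    filter_upwards [hSmax] with ω hω
    refine ciSup_le fun j => ?_
    have h2 : S ω j ≤ ⨆ k, S ω k :=
      le_ciSup (Set.Finite.bddAbove (Set.finite_range _)) j
    have h3 := hu0 j
    rw [hω] at h2
    linarith
  -- joint law is a product
  set μS := Measure.map S ℙ with hμSdef
  have hμSprob : IsProbabilityMeasure μS := Measure.isProbabilityMeasure_map hSmeas.aemeasurable
  have hjoint : Measure.map (fun ω => (E ω, S ω)) ℙ = (Measure.map E ℙ).prod μS :=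
    (indepFun_iff_map_prod_eq_prod_map_map hEmeas.aemeasurable hSmeas.aemeasurable).mp hindep
  -- key computation
  have key : ∀ a : (Fin D → ℝ) → ℝ, Measurable a → (∀ᵐ ω ∂ℙ, 0 ≤ a (S ω)) →
      ∀ C : Set (Fin D → ℝ), MeasurableSet C →
      ℙ {ω | a (S ω) < E ω ∧ S ω ∈ C}
        = ∫⁻ s in C, ENNReal.ofReal (Real.exp (-a s)) ∂μS := by
    intro a ha ha0 C hC
    have hsm : MeasurableSet {p : ℝ × (Fin D → ℝ) | a p.2 < p.1 ∧ p.2 ∈ C} :=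
      (measurableSet_lt (ha.comp measurable_snd) measurable_fst).inter (measurable_snd hC)
    have hpre : {ω | a (S ω) < E ω ∧ S ω ∈ C}
        = (fun ω => (E ω, S ω)) ⁻¹' {p | a p.2 < p.1 ∧ p.2 ∈ C} := rfl
    rw [hpre, ← Measure.map_apply (hEmeas.prodMk hSmeas) hsm, hjoint,
      Measure.prod_apply_symm hsm]
    have hae : ∀ᵐ s ∂μS, 0 ≤ a s := by
      rw [hμSdef, ae_map_iff hSmeas.aemeasurable (measurableSet_le measurable_const ha)]
      exact ha0
    calc ∫⁻ s, (Measure.map E ℙ) ((fun x => (x, s)) ⁻¹' {p | a p.2 < p.1 ∧ p.2 ∈ C}) ∂μS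
        = ∫⁻ s, C.indicator (fun s => (Measure.map E ℙ) (Set.Ioi (a s))) s ∂μS := by
          refine lintegral_congr fun s => ?_
          by_cases hs : s ∈ C
          · rw [Set.indicator_of_mem hs]
            congr 1
            ext x
            simp [hs, Set.mem_Ioi]
          · rw [Set.indicator_of_notMem hs]
            have hemp : ((fun x : ℝ => (x, s)) ⁻¹' {p | a p.2 < p.1 ∧ p.2 ∈ C}) = ∅ := by
              ext x; simp [hs]
            rw [hemp]
            simp
      _ = ∫⁻ s in C, (Measure.map E ℙ) (Set.Ioi (a s)) ∂μS := by
          rw [lintegral_indicator hC]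
      _ = ∫⁻ s in C, ENNReal.ofReal (Real.exp (-a s)) ∂μS := by
          refine lintegral_congr_ae ?_
          filter_upwards [ae_restrict_of_ae hae] with s hs
          rw [Measure.map_apply hEmeas measurableSet_Ioi]
          exact hEexp _ hs
  set T : (Fin D → ℝ) → ℝ := fun s => -Q s with hTdef
  have hTmeas : Measurable T := hQmeas.neg
  have hT0 : ∀ᵐ ω ∂ℙ, 0 ≤ T (S ω) := by
    filter_upwards [hQ0] with ω hω
    simp only [hTdef]
    linarith
  -- measure of A intersected with S-events
  have hPA : ∀ C : Set (Fin D → ℝ), MeasurableSet C →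
      ℙ (A ∩ S ⁻¹' C) = ∫⁻ s in C, ENNReal.ofReal (Real.exp (-T s)) ∂μS := by
    intro C hC
    have hset : A ∩ S ⁻¹' C = {ω | T (S ω) < E ω ∧ S ω ∈ C} := by
      rw [hAE]
      ext ω
      simp only [Set.mem_inter_iff, Set.mem_setOf_eq, Set.mem_preimage, hTdef]
    rw [hset]
    exact key T hTmeas hT0 C hC
  have hPAuniv : ℙ A = ∫⁻ s, ENNReal.ofReal (Real.exp (-T s)) ∂μS := by
    have h1 := hPA Set.univ MeasurableSet.univ
    simpa using h1
  have hPApos : 0 < ℙ A := by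
    rw [hPAuniv]
    rw [pos_iff_ne_zero]
    intro hzero
    have hmeas : Measurable fun s => ENNReal.ofReal (Real.exp (-T s)) :=
      ENNReal.measurable_ofReal.comp (Real.measurable_exp.comp hTmeas.neg)
    rw [lintegral_eq_zero_iff hmeas] at hzero
    have hne' : (ae μS).NeBot := IsProbabilityMeasure.ae_neBot
    obtain ⟨s, hs⟩ := hzero.exists
    simp only [Pi.zero_apply, ENNReal.ofReal_eq_zero] at hs
    exact absurd hs (not_le.2 (Real.exp_pos _))
  have hPAne : ℙ A ≠ 0 := hPApos.ne'
  have hPAfin : ℙ A ≠ ⊤ := measure_ne_top _ _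
  -- exceedance probabilities of M' on A
  have hMA : ∀ t : ℝ, 0 ≤ t → ∀ C : Set (Fin D → ℝ), MeasurableSet C →
      ℙ ({ω | t < M' ω} ∩ (A ∩ S ⁻¹' C))
        = ENNReal.ofReal (Real.exp (-t)) * ℙ (A ∩ S ⁻¹' C) := by
    intro t ht C hC
    have hset : {ω | t < M' ω} ∩ (A ∩ S ⁻¹' C)
        = {ω | (fun s => T s + t) (S ω) < E ω ∧ S ω ∈ C} := by
      ext ω
      simp only [Set.mem_inter_iff, Set.mem_setOf_eq, Set.mem_preimage, hAE, hTdef]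
      rw [hM'eq ω]
      constructor
      · rintro ⟨h1, _, h3⟩
        exact ⟨by linarith, h3⟩
      · rintro ⟨h1, h2⟩
        exact ⟨by linarith, by linarith, h2⟩
    have haet : ∀ᵐ ω ∂ℙ, 0 ≤ T (S ω) + t := by
      filter_upwards [hT0] with ω hω
      linarith
    rw [hset, key _ (hTmeas.add_const t) haet C hC, hPA C hC]
    have hfac : ∀ s : Fin D → ℝ, ENNReal.ofReal (Real.exp (-(T s + t)))
        = ENNReal.ofReal (Real.exp (-t)) * ENNReal.ofReal (Real.exp (-T s)) := by
      intro s
      rw [← ENNReal.ofReal_mul (le_of_lt (Real.exp_pos _)), ← Real.exp_add]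
      ring_nf
    simp_rw [hfac]
    have hgm : Measurable fun s : Fin D → ℝ => ENNReal.ofReal (Real.exp (-T s)) :=
      ENNReal.measurable_ofReal.comp (Real.measurable_exp.comp hTmeas.neg)
    rw [lintegral_const_mul _ hgm]
  -- part (v)
  have htail : ∀ t : ℝ, 0 ≤ t → ℙ[{ω | t < M' ω} | A] = ENNReal.ofReal (Real.exp (-t)) := by
    intro t ht
    rw [cond_apply hAmeas]
    have h1 := hMA t ht Set.univ MeasurableSet.univ
    simp only [Set.preimage_univ, Set.inter_univ] at h1
    rw [Set.inter_comm, h1, ← mul_assoc, mul_comm (ℙ A)⁻¹,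
      mul_assoc, ENNReal.inv_mul_cancel hPAne hPAfin, mul_one]
  -- independence
  haveI hprobcond : IsProbabilityMeasure (ℙ[|A]) := cond_isProbabilityMeasure hPAne
  have hM'meas : Measurable M' := by
    have h1 : M' = fun ω => E ω + Q (S ω) := funext hM'eq
    rw [h1]
    exact hEmeas.add (hQmeas.comp hSmeas)
  set h : (Fin D → ℝ) → (Fin D → ℝ) := fun s j => s j - u j + T s with hhdef
  have hhmeas : Measurable h :=
    measurable_pi_lambda _ fun j => ((measurable_pi_apply j).sub measurable_const).add hTmeas
  have hWeq : (fun ω => fun j => Z' ω j - M' ω) = fun ω => h (S ω) := by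
    funext ω
    funext j
    simp only [hhdef, hTdef]
    rw [hZ'eq ω j, hM'eq ω]
    ring
  have hWmeas : Measurable (fun ω => h (S ω)) := hhmeas.comp hSmeas
  refine ⟨hu0, hAZ, hPApos, fun ω _ j => hZ'eq ω j, htail, ?_⟩
  rw [hWeq]
  -- π-systems
  have hind : Indep (MeasurableSpace.comap M' inferInstance)
      (MeasurableSpace.comap (fun ω => h (S ω)) inferInstance) (ℙ[|A]) := by
    refine IndepSets.indep (hM'meas.comap_le) (hWmeas.comap_le)
      (p1 := Set.preimage M' '' Set.range Set.Ioi)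
      (p2 := {s | MeasurableSet[MeasurableSpace.comap (fun ω => h (S ω)) inferInstance] s})
      ?_ ?_ ?_ ?_ ?_
    · rintro _ ⟨_, ⟨t1, rfl⟩, rfl⟩ _ ⟨_, ⟨t2, rfl⟩, rfl⟩ _
      refine ⟨Set.Ioi t1 ∩ Set.Ioi t2, ?_, (Set.preimage_inter).symm⟩
      rw [Set.Ioi_inter_Ioi]
      exact Set.mem_range_self _
    · intro s hs t' ht' _
      simp only [Set.mem_setOf_eq] at hs ht' ⊢
      exact MeasurableSet.inter hs ht'
    · rw [show (inferInstance : MeasurableSpace ℝ) = borel ℝ from BorelSpace.measurable_eq,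
        borel_eq_generateFrom_Ioi, MeasurableSpace.comap_generateFrom]
    · exact (@MeasurableSpace.generateFrom_measurableSet Ω
        (MeasurableSpace.comap (fun ω => h (S ω)) inferInstance)).symm
    · rw [IndepSets_iff]
      rintro s1 s2 ⟨_, ⟨t, rfl⟩, rfl⟩ hs2
      obtain ⟨C, hCmeas, rfl⟩ := hs2
      have hCCeq : (fun ω => h (S ω)) ⁻¹' C = S ⁻¹' (h ⁻¹' C) := rfl
      set C' : Set (Fin D → ℝ) := h ⁻¹' C with hC'def
      have hC' : MeasurableSet C' := hhmeas hCmeas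
      rw [hCCeq]
      rw [cond_apply hAmeas, cond_apply hAmeas, cond_apply hAmeas]
      rcases le_or_gt 0 t with ht | ht
      · have h1 : A ∩ (M' ⁻¹' Set.Ioi t ∩ S ⁻¹' C')
            = {ω | t < M' ω} ∩ (A ∩ S ⁻¹' C') := by
          ext ω
          simp only [Set.mem_inter_iff, Set.mem_preimage, Set.mem_Ioi, Set.mem_setOf_eq]
          tauto
        have h2 : A ∩ M' ⁻¹' Set.Ioi t = {ω | t < M' ω} ∩ (A ∩ S ⁻¹' Set.univ) := by
          ext ω
          simp only [Set.mem_inter_iff, Set.mem_preimage, Set.mem_Ioi, Set.mem_setOf_eq,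
            Set.mem_univ, and_true]
          tauto
        have h3 := hMA t ht C' hC'
        have h4 := hMA t ht Set.univ MeasurableSet.univ
        simp only [Set.preimage_univ, Set.inter_univ] at h4
        rw [h1, h3, h2]
        simp only [Set.preimage_univ, Set.inter_univ]
        rw [h4]
        have hcan : (ℙ A)⁻¹ * (ENNReal.ofReal (Real.exp (-t)) * ℙ A)
            = ENNReal.ofReal (Real.exp (-t)) := by
          rw [mul_comm (ENNReal.ofReal _) (ℙ A), ← mul_assoc,
            ENNReal.inv_mul_cancel hPAne hPAfin, one_mul]
        rw [hcan]
        ring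
      · have hsub : A ⊆ M' ⁻¹' Set.Ioi t := by
          intro ω hω
          rw [hAE] at hω
          simp only [Set.mem_setOf_eq] at hω
          simp only [Set.mem_preimage, Set.mem_Ioi]
          rw [hM'eq ω]
          linarith
        have h1 : A ∩ (M' ⁻¹' Set.Ioi t ∩ S ⁻¹' C') = A ∩ S ⁻¹' C' := by
          ext ω
          simp only [Set.mem_inter_iff]
          constructor
          · rintro ⟨ha, _, hc⟩; exact ⟨ha, hc⟩
          · rintro ⟨ha, hc⟩; exact ⟨ha, hsub ha, hc⟩
        have h2 : A ∩ M' ⁻¹' Set.Ioi t = A := by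
          ext ω
          simp only [Set.mem_inter_iff]
          exact ⟨fun h => h.1, fun h => ⟨h, hsub h⟩⟩
        rw [h1, h2, ENNReal.inv_mul_cancel hPAne hPAfin, one_mul]
  exact hind
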